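/- For every α ∈ [−1, 1/2], the Takagi–Landsberg function f_α has t = 1/2 as its unique global maximizer on [0,1], and the maximum value is f_α(1/2) = 1/2. -/

import Mathlib

open MeasureTheory Filter Set

/-- The tent map: distance to the nearest integer. -/
noncomputable def phi (t : ℝ) : ℝ := ⨅ z : ℤ, |t - (z : ℝ)|

/-- A function in the Takagi class, for coefficient sequence `c`. -/
noncomputable def takagiF (c : ℕ → ℝ) (t : ℝ) : ℝ := ∑' m : ℕ, c m * phi (2 ^ m * t)

/-- `T(ρ) = Σ 2^{-(n+2)} (1 - ρ n)`. -/
noncomputable def Trho (ρ : ℕ → ℝ) : ℝ := ∑' n : ℕ, (1 - ρ n) / 2 ^ (n + 2)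

/-- A `{-1,+1}`-valued sequence. -/
def IsSign (ρ : ℕ → ℝ) : Prop := ∀ n, ρ n = 1 ∨ ρ n = -1

/-- `ρ` is a Rademacher expansion of `t`. -/
def IsRademacherExp (ρ : ℕ → ℝ) (t : ℝ) : Prop := IsSign ρ ∧ Trho ρ = t

/-- The step condition for coefficients `c`. -/
def StepCond (c : ℕ → ℝ) (ρ : ℕ → ℝ) : Prop :=
  ∀ n : ℕ, 1 ≤ n → ρ n * ∑ m ∈ Finset.range n, 2 ^ m * c m * ρ m ≤ 0

noncomputable def sharpAux (c : ℕ → ℝ) : ℕ → ℝ × ℝ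
  | 0 => (1, c 0)
  | n + 1 =>
    let S := (sharpAux c n).2
    let r : ℝ := if S ≤ 0 then 1 else -1
    (r, S + 2 ^ (n + 1) * c (n + 1) * r)

/-- The sequence `ρ♯` for coefficients `c`. -/
noncomputable def rhoSharp (c : ℕ → ℝ) (n : ℕ) : ℝ := (sharpAux c n).1

noncomputable def flatAux (c : ℕ → ℝ) : ℕ → ℝ × ℝ
  | 0 => (1, c 0)
  | n + 1 =>
    let S := (flatAux c n).2
    let r : ℝ := if S < 0 then 1 else -1
    (r, S + 2 ^ (n + 1) * c (n + 1) * r)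

/-- The sequence `ρ♭` for coefficients `c`. -/
noncomputable def rhoFlat (c : ℕ → ℝ) (n : ℕ) : ℝ := (flatAux c n).1

/-- The Takagi–Landsberg function with parameter `α`. -/
noncomputable def fTL (α : ℝ) (t : ℝ) : ℝ := ∑' m : ℕ, α ^ m / 2 ^ m * phi (2 ^ m * t)

noncomputable def sharpAuxTL (α : ℝ) : ℕ → ℝ × ℝ
  | 0 => (1, 1)
  | n + 1 =>
    let S := (sharpAuxTL α n).2
    let r : ℝ := if S ≤ 0 then 1 else -1
    (r, S + α ^ (n + 1) * r)

/-- The sequence `ρ♯(α)` for the Takagi–Landsberg function. -/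
noncomputable def rhoSharpTL (α : ℝ) (n : ℕ) : ℝ := (sharpAuxTL α n).1

noncomputable def flatAuxTL (α : ℝ) : ℕ → ℝ × ℝ
  | 0 => (1, 1)
  | n + 1 =>
    let S := (flatAuxTL α n).2
    let r : ℝ := if S < 0 then 1 else -1
    (r, S + α ^ (n + 1) * r)

/-- The sequence `ρ♭(α)` for the Takagi–Landsberg function. -/
noncomputable def rhoFlatTL (α : ℝ) (n : ℕ) : ℝ := (flatAuxTL α n).1

/-- `τ♯(α) = T(ρ♯(α))`. -/
noncomputable def tauSharp (α : ℝ) : ℝ := Trho (rhoSharpTL α)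

/-- `τ♭(α) = T(ρ♭(α))`. -/
noncomputable def tauFlat (α : ℝ) : ℝ := Trho (rhoFlatTL α)

/-- The Littlewood polynomial `p_{2n}(x) = 1 - x - x² - ⋯ - x^{2n}`. -/
noncomputable def p2n (n : ℕ) (x : ℝ) : ℝ := 1 - ∑ m ∈ Finset.Icc 1 (2 * n), x ^ m

section TakagiProofAux

private lemma phi_bdd (x : ℝ) : BddBelow (Set.range fun z : ℤ => |x - (z : ℝ)|) :=
  ⟨0, by rintro _ ⟨z, rfl⟩; exact abs_nonneg _⟩

private lemma phi_eq_round (x : ℝ) : phi x = |x - round x| :=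
  le_antisymm (ciInf_le (phi_bdd x) (round x)) (le_ciInf fun z => round_le x z)

private lemma phi_nonneg (x : ℝ) : 0 ≤ phi x := by
  rw [phi_eq_round]; exact abs_nonneg _

private lemma phi_le_half (x : ℝ) : phi x ≤ 1 / 2 := by
  rw [phi_eq_round]; exact abs_sub_round x

private lemma phi_add_int (x : ℝ) (n : ℤ) : phi (x + n) = phi x := by
  rw [phi_eq_round, phi_eq_round, round_add_intCast]
  congr 1
  push_cast
  ring

private lemma phi_neg (x : ℝ) : phi (-x) = phi x := by
  have h : ∀ y : ℝ, phi (-y) ≤ phi y := by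
    intro y
    have h1 := ciInf_le (phi_bdd (-y)) (-(round y))
    rw [phi_eq_round y]
    calc phi (-y) ≤ |(-y) - ((-(round y) : ℤ) : ℝ)| := h1
      _ = |y - round y| := by push_cast; rw [show -y - -(round y : ℝ) = -(y - round y) by ring, abs_neg]
  refine le_antisymm (h x) ?_
  have := h (-x)
  rwa [neg_neg] at this

private lemma phi_Icc {x : ℝ} (h0 : 0 ≤ x) (h1 : x ≤ 1) : phi x = min x (1 - x) := by
  refine le_antisymm (le_min ?_ ?_) (le_ciInf fun z => ?_)
  · have := ciInf_le (phi_bdd x) 0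
    calc phi x ≤ |x - ((0 : ℤ) : ℝ)| := this
      _ = x := by simp [abs_of_nonneg h0]
  · have := ciInf_le (phi_bdd x) 1
    calc phi x ≤ |x - ((1 : ℤ) : ℝ)| := this
      _ = 1 - x := by rw [abs_of_nonpos (by push_cast; linarith)]; push_cast; ring
  · rcases le_or_gt (z : ℝ) 0 with hz | hz
    · calc min x (1 - x) ≤ x := min_le_left _ _
        _ ≤ x - z := by linarith
        _ ≤ |x - z| := le_abs_self _
    · have hz1 : (1 : ℝ) ≤ (z : ℝ) := by exact_mod_cast hz
      calc min x (1 - x) ≤ 1 - x := min_le_right _ _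
        _ ≤ (z : ℝ) - x := by linarith
        _ ≤ |x - z| := by rw [abs_sub_comm]; exact le_abs_self _

private lemma phi_two_mul (x : ℝ) : phi (2 * x) = 2 * min (phi x) (1 / 2 - phi x) := by
  set d := |x - round x| with hd
  have hd0 : 0 ≤ d := abs_nonneg _
  have hdh : d ≤ 1 / 2 := abs_sub_round x
  have hx : phi x = d := phi_eq_round x
  have h2 : (2 : ℝ) * x = 2 * (x - round x) + ((2 * round x : ℤ) : ℝ) := by push_cast; ring
  have h3 : phi (2 * x) = phi (2 * (x - round x)) := by rw [h2, phi_add_int]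
  have h4 : phi (2 * (x - round x)) = phi (2 * d) := by
    rcases abs_cases (x - round x) with ⟨he, _⟩ | ⟨he, _⟩
    · rw [hd, he]
    · rw [hd, he, show (2 : ℝ) * -(x - round x) = -(2 * (x - round x)) by ring, phi_neg]
  rw [h3, h4, phi_Icc (by linarith) (by linarith), hx]
  rcases le_total d (1 / 2 - d) with h | h
  · rw [min_eq_left (by linarith : (2:ℝ)*d ≤ 1 - 2*d), min_eq_left h]
  · rw [min_eq_right (by linarith : (1:ℝ) - 2*d ≤ 2*d), min_eq_right h]; ring


private noncomputable def yseq (t : ℝ) : ℕ → ℝ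
  | 0 => phi t
  | n + 1 => 2 * min (yseq t n) (1 / 2 - yseq t n)

private lemma yseq_mem (t : ℝ) : ∀ n, 0 ≤ yseq t n ∧ yseq t n ≤ 1 / 2
  | 0 => ⟨phi_nonneg t, phi_le_half t⟩
  | (n + 1) => by
    obtain ⟨h0, h1⟩ := yseq_mem t n
    constructor
    · have : (0 : ℝ) ≤ min (yseq t n) (1 / 2 - yseq t n) := le_min h0 (by linarith)
      simp only [yseq]; linarith
    · simp only [yseq]
      rcases le_total (yseq t n) (1 / 2 - yseq t n) with h | h
      · rw [min_eq_left h]; linarith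
      · rw [min_eq_right h]; linarith

private lemma phi_pow (t : ℝ) : ∀ m, phi (2 ^ m * t) = yseq t m
  | 0 => by simp [yseq]
  | (m + 1) => by
    rw [show (2 : ℝ) ^ (m + 1) * t = 2 * (2 ^ m * t) by ring, phi_two_mul, phi_pow t m]
    simp [yseq]

private lemma summable_term {β : ℝ} (hβ : |β| ≤ 1 / 2) {w : ℕ → ℝ}
    (hw : ∀ n, |w n| ≤ 1 / 2) : Summable fun n => β ^ n * w n := by
  have hgeo : Summable fun n : ℕ => (1 / 2 : ℝ) ^ n :=
    summable_geometric_of_lt_one (by norm_num) (by norm_num)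
  refine Summable.of_abs (Summable.of_nonneg_of_le (fun n => abs_nonneg _) (fun n => ?_) hgeo)
  rw [abs_mul, abs_pow]
  calc |β| ^ n * |w n| ≤ (1 / 2) ^ n * 1 := by
        apply mul_le_mul (pow_le_pow_left₀ (abs_nonneg _) hβ n) (le_trans (hw n) (by norm_num))
          (abs_nonneg _) (by positivity)
    _ = (1 / 2) ^ n := by ring

private lemma fTL_lt_half {α : ℝ} (hα1 : -1 ≤ α) (hα2 : α ≤ 1 / 2) {t : ℝ}
    (ht0 : 0 ≤ t) (ht1 : t ≤ 1) (hne : t ≠ 1 / 2) : fTL α t < 1 / 2 := by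
  set β := α / 2 with hβdef
  have hβ1 : -(1 / 2 : ℝ) ≤ β := by rw [hβdef]; linarith
  have hβ2 : β ≤ 1 / 4 := by rw [hβdef]; linarith
  have hβabs : |β| ≤ 1 / 2 := abs_le.mpr ⟨by linarith, by linarith⟩
  set y := yseq t with hydef
  set g : ℕ → ℝ := fun m => min (y m) (1 / 2 - y m) with hgdef
  have hy0 : ∀ m, 0 ≤ y m := fun m => (yseq_mem t m).1
  have hyh : ∀ m, y m ≤ 1 / 2 := fun m => (yseq_mem t m).2
  have hysucc : ∀ m, y (m + 1) = 2 * g m := fun m => by simp [hydef, hgdef, yseq]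
  have hg0 : ∀ m, 0 ≤ g m := fun m => le_min (hy0 m) (by linarith [hyh m])
  have hgy : ∀ m, g m ≤ y m := fun m => min_le_left _ _
  have hgu : ∀ m, g m ≤ 1 / 2 - y m := fun m => min_le_right _ _
  have hgh : ∀ m, g m ≤ 1 / 2 := fun m => le_trans (hgy m) (hyh m)
  have hgrow : ∀ m, g (m + 1) ≤ 2 * g m := fun m => le_of_le_of_eq (hgy (m + 1)) (hysucc m)
  have Sy : Summable fun m => β ^ m * y m :=
    summable_term hβabs fun n => by rw [abs_of_nonneg (hy0 n)]; exact hyh n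
  have Sg : Summable fun m => β ^ m * g m :=
    summable_term hβabs fun n => by rw [abs_of_nonneg (hg0 n)]; exact hgh n
  set G := ∑' m, β ^ m * g m with hGdef
  -- rewrite fTL
  have hfTL : fTL α t = ∑' m, β ^ m * y m := by
    apply tsum_congr
    intro m
    rw [phi_pow t m, hβdef, div_pow]
  have hid : fTL α t = y 0 + 2 * β * G := by
    rw [hfTL, Sy.tsum_eq_zero_add]
    simp only [pow_zero, one_mul]
    congr 1
    calc ∑' m, β ^ (m + 1) * y (m + 1) = ∑' m, 2 * β * (β ^ m * g m) := by
          apply tsum_congr; intro m; rw [hysucc m]; ring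
      _ = 2 * β * G := tsum_mul_left
  -- y 0 < 1/2
  have hy0lt : y 0 < 1 / 2 := by
    have : y 0 = min t (1 - t) := by
      rw [hydef, show yseq t 0 = phi t from rfl, phi_Icc ht0 ht1]
    rcases lt_or_gt_of_ne hne with h | h
    · rw [this]; exact lt_of_le_of_lt (min_le_left _ _) h
    · rw [this]; exact lt_of_le_of_lt (min_le_right _ _) (by linarith)
  -- key inequality
  have hkey : 2 * β * G < 1 / 2 - y 0 := by
    rcases le_or_gt β 0 with hb | hb
    · -- β ≤ 0 : show 0 ≤ G
      have hGnn : 0 ≤ G := by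
        have h2inj : Function.Injective fun k : ℕ => 2 * k := fun a b h => by dsimp at h; omega
        have h2inj' : Function.Injective fun k : ℕ => 2 * k + 1 := fun a b h => by dsimp at h; omega
        have hSe : Summable fun k => β ^ (2 * k) * g (2 * k) := by
          have := Sg.comp_injective h2inj
          exact this
        have hSo : Summable fun k => β ^ (2 * k + 1) * g (2 * k + 1) := by
          have := Sg.comp_injective h2inj'
          exact this
        have hsplit := tsum_even_add_odd (f := fun m => β ^ m * g m) hSe hSo
        rw [hGdef, ← hsplit, ← hSe.tsum_add hSo]
        apply tsum_nonneg
        intro k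
        have he : (0 : ℝ) ≤ β ^ (2 * k) := by
          rw [pow_mul]; exact pow_nonneg (sq_nonneg β) k
        have hodd : β ^ (2 * k + 1) * g (2 * k + 1) ≥ β ^ (2 * k + 1) * (2 * g (2 * k)) := by
          apply mul_le_mul_of_nonpos_left (hgrow (2 * k))
          rw [pow_succ]
          exact mul_nonpos_of_nonneg_of_nonpos he hb
        have : β ^ (2 * k + 1) = β ^ (2 * k) * β := by rw [pow_succ]
        nlinarith [hg0 (2 * k), mul_nonneg he (hg0 (2 * k))]
      nlinarith
    · -- 0 < β ≤ 1/4
      by_cases hyz : y 0 = 0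
      · have hall : ∀ m, y m = 0 := by
          intro m
          induction m with
          | zero => exact hyz
          | succ n ih => rw [hysucc n, hgdef]; simp [ih]
        have hGz : G = 0 := by
          rw [hGdef]
          convert tsum_zero with m
          rw [hgdef]; simp [hall m]
        rw [hGz, hyz]; norm_num
      · have hy0pos : 0 < y 0 := lt_of_le_of_ne (hy0 0) (Ne.symm hyz)
        have hg0pos : 0 < g 0 := lt_min hy0pos (by linarith)
        have hgpow : ∀ m, g m ≤ 2 ^ m * g 0 := by
          intro m
          induction m with
          | zero => simp
          | succ n ih =>
            calc g (n + 1) ≤ 2 * g n := hgrow n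
              _ ≤ 2 * (2 ^ n * g 0) := by linarith
              _ = 2 ^ (n + 1) * g 0 := by ring
        obtain ⟨N, hN⟩ : ∃ N : ℕ, 1 / 2 < 2 ^ N * g 0 := by
          obtain ⟨N, hN⟩ := pow_unbounded_of_one_lt ((1 / 2) / g 0) (one_lt_two (α := ℝ))
          refine ⟨N, ?_⟩
          rw [div_lt_iff₀ hg0pos] at hN
          linarith
        have S2β : Summable fun m : ℕ => (2 * β) ^ m :=
          summable_geometric_of_lt_one (by linarith) (by linarith)
        have Sgeo : Summable fun m : ℕ => (2 * β) ^ m * g 0 := S2β.mul_right _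
        have hle : ∀ m, β ^ m * g m ≤ (2 * β) ^ m * g 0 := by
          intro m
          have hβm : (0 : ℝ) ≤ β ^ m := pow_nonneg hb.le m
          calc β ^ m * g m ≤ β ^ m * (2 ^ m * g 0) :=
                mul_le_mul_of_nonneg_left (hgpow m) hβm
            _ = (2 * β) ^ m * g 0 := by rw [mul_pow]; ring
        have hstrict : β ^ N * g N < (2 * β) ^ N * g 0 := by
          have hβN : (0 : ℝ) < β ^ N := pow_pos hb N
          calc β ^ N * g N ≤ β ^ N * (1 / 2) :=
                mul_le_mul_of_nonneg_left (hgh N) hβN.le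
            _ < β ^ N * (2 ^ N * g 0) := by
                apply mul_lt_mul_of_pos_left hN hβN
            _ = (2 * β) ^ N * g 0 := by rw [mul_pow]; ring
        have hlt : G < ∑' m, (2 * β) ^ m * g 0 := Summable.tsum_lt_tsum hle hstrict Sg Sgeo
        have hgeo : ∑' m, (2 * β) ^ m * g 0 = (1 - 2 * β)⁻¹ * g 0 := by
          rw [tsum_mul_right, tsum_geometric_of_lt_one (by linarith) (by linarith)]
        rw [hgeo] at hlt
        have h3 : (0 : ℝ) < 1 - 2 * β := by linarith
        have hc := mul_inv_cancel₀ (ne_of_gt h3)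
        have h2 : 2 * β * ((1 - 2 * β)⁻¹ * g 0) ≤ g 0 := by
          have hinv : (0 : ℝ) < (1 - 2 * β)⁻¹ := inv_pos.mpr h3
          nlinarith [mul_nonneg hinv.le hg0pos.le]
        have h1 : 2 * β * G < 2 * β * ((1 - 2 * β)⁻¹ * g 0) :=
          mul_lt_mul_of_pos_left hlt (by linarith)
        have h4 : g 0 ≤ 1 / 2 - y 0 := hgu 0
        linarith
  rw [hid]; linarith

private lemma fTL_half (α : ℝ) : fTL α (1 / 2) = 1 / 2 := by
  have hvan : ∀ m : ℕ, m ≠ 0 → α ^ m / 2 ^ m * phi (2 ^ m * (1 / 2)) = 0 := by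
    intro m hm
    obtain ⟨k, rfl⟩ := Nat.exists_eq_succ_of_ne_zero hm
    have h1 : (2 : ℝ) ^ (k + 1) * (1 / 2) = 0 + ((2 ^ k : ℤ) : ℝ) := by push_cast; ring
    have h2 : phi (2 ^ (k + 1) * (1 / 2)) = 0 := by
      rw [h1, phi_add_int, phi_eq_round]
      simp
    rw [h2, mul_zero]
  rw [fTL, tsum_eq_single 0 hvan]
  norm_num
  rw [phi_Icc (by norm_num) (by norm_num)]
  norm_num

end TakagiProofAux

theorem takagi_landsberg_maximizer_middle_range
    (α : ℝ) (hα : α ∈ Set.Icc (-1 : ℝ) (1 / 2)) :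
    {t : ℝ | t ∈ Set.Icc (0 : ℝ) 1 ∧ ∀ s ∈ Set.Icc (0 : ℝ) 1, fTL α s ≤ fTL α t}
      = {1 / 2}
    ∧ fTL α (1 / 2) = 1 / 2 := by
  obtain ⟨hα1, hα2⟩ := hα
  have hval := fTL_half α
  refine ⟨?_, hval⟩
  ext t
  simp only [Set.mem_setOf_eq, Set.mem_singleton_iff, Set.mem_Icc]
  constructor
  · rintro ⟨⟨ht0, ht1⟩, hmax⟩
    by_contra hne
    have h1 : fTL α t < 1 / 2 := fTL_lt_half hα1 hα2 ht0 ht1 hne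
    have h2 : fTL α (1 / 2) ≤ fTL α t := hmax (1 / 2) (by norm_num)
    rw [hval] at h2
    linarith
  · rintro rfl
    refine ⟨by norm_num, fun s hs => ?_⟩
    rw [hval]
    rcases eq_or_ne s (1 / 2) with rfl | hne
    · rw [hval]
    · exact (fTL_lt_half hα1 hα2 hs.1 hs.2 hne).le
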